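/- Assume f is continuous ((f0)) and satisfies (f1) and (f2). Let (u_n) be a sequence of measurable functions from ℝ^N to ℝ such that sup_n ∫_{ℝ^N} |u_n|^{p^*} dx < +∞ and ∫_{ℝ^N} |u_n|^{p_*} dx → 0 as n → ∞. Then ∫_{ℝ^N} F(u_n) dx → 0 and ∫_{ℝ^N} F̃(u_n) dx → 0 as n → ∞. (Lemma 2.1(ii), stated with the L^{p^*}-bound that the Sobolev bound yields.) -/

import Mathlib

open Filter Set MeasureTheory

private lemma abs_rpow_mul_abs (t e : ℝ) (he : 1 < e) : |t| ^ (e - 1) * |t| = |t| ^ e := by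
  rcases eq_or_ne t 0 with h | h
  · simp [h, Real.zero_rpow (by linarith : e - 1 ≠ 0), Real.zero_rpow (by linarith : e ≠ 0)]
  · have h0 : |t| ≠ 0 := abs_ne_zero.mpr h
    rw [← Real.rpow_add_one h0 (e - 1)]
    ring_nf

private lemma growth_bound (f : ℝ → ℝ) (hf0 : Continuous f) (q r : ℝ) (hr : 1 < r) (hq : r < q)
    (hf1 : Tendsto (fun t : ℝ => f t / |t| ^ (r - 1)) (nhdsWithin 0 {0}ᶜ) (nhds 0))
    (hf2 : Tendsto (fun t : ℝ => f t / |t| ^ (q - 1)) (cocompact ℝ) (nhds 0))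
    (ε : ℝ) (hε : 0 < ε) :
    ∃ D ≥ 0, ∀ t : ℝ, |f t| ≤ ε * |t| ^ (q - 1) + D * |t| ^ (r - 1) := by
  have hr0 : (0:ℝ) < r - 1 := by linarith
  have hq0 : (0:ℝ) < q - 1 := by linarith
  -- f 0 = 0
  have f0 : f 0 = 0 := by
    have hlim : Tendsto (fun t : ℝ => |t| ^ (r - 1)) (nhdsWithin 0 {0}ᶜ) (nhds 0) := by
      have hc : ContinuousAt (fun t : ℝ => |t| ^ (r - 1)) 0 := by
        exact (Real.continuousAt_rpow_const (|0|) (r - 1) (Or.inr hr0.le)).comp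
          continuous_abs.continuousAt
      have h0 : |(0:ℝ)| ^ (r - 1) = 0 := by
        simp [Real.zero_rpow (by linarith : r - 1 ≠ 0)]
      have := hc.continuousWithinAt (s := {(0:ℝ)}ᶜ)
      rw [ContinuousWithinAt, h0] at this
      exact this
    have h1 : Tendsto f (nhdsWithin 0 {0}ᶜ) (nhds 0) := by
      have hmul := hf1.mul hlim
      rw [zero_mul] at hmul
      refine hmul.congr' ?_
      filter_upwards [self_mem_nhdsWithin] with t ht
      have ht0 : t ≠ 0 := ht
      have : |t| ^ (r - 1) ≠ 0 :=
        (Real.rpow_pos_of_pos (abs_pos.mpr ht0) (r - 1)).ne'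
      field_simp
    have h2 : Tendsto f (nhdsWithin 0 {0}ᶜ) (nhds (f 0)) :=
      (hf0.continuousAt (x := 0)).continuousWithinAt
    exact tendsto_nhds_unique h2 h1
  -- large |t|
  have h2' : {t : ℝ | |f t / |t| ^ (q - 1)| < ε} ∈ cocompact ℝ := by
    have := Metric.tendsto_nhds.mp hf2 ε hε
    simp only [Real.dist_eq, sub_zero] at this
    exact this
  obtain ⟨K, hK, hKs⟩ := mem_cocompact.mp h2'
  obtain ⟨M0, hM0⟩ := hK.isBounded.subset_closedBall 0
  set M : ℝ := max M0 1 with hM_def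
  have hM1 : (1:ℝ) ≤ M := le_max_right _ _
  have hlarge : ∀ t : ℝ, M < |t| → |f t| ≤ ε * |t| ^ (q - 1) := by
    intro t ht
    have htK : t ∉ K := by
      intro h
      have := hM0 h
      rw [Metric.mem_closedBall, dist_zero_right, Real.norm_eq_abs] at this
      have : |t| ≤ M := le_trans this (le_max_left _ _)
      linarith
    have hmem := hKs htK
    simp only [Set.mem_setOf_eq] at hmem
    have htpos : 0 < |t| := by linarith
    have hpos : 0 < |t| ^ (q - 1) := Real.rpow_pos_of_pos htpos _
    rw [abs_div, abs_of_nonneg hpos.le, div_lt_iff₀ hpos] at hmem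
    exact hmem.le
  -- small |t|
  have h1' : ∀ᶠ t in nhdsWithin 0 {0}ᶜ, |f t / |t| ^ (r - 1)| < ε := by
    have := Metric.tendsto_nhds.mp hf1 ε hε
    simpa only [Real.dist_eq, sub_zero] using this
  rw [eventually_nhdsWithin_iff, Metric.eventually_nhds_iff] at h1'
  obtain ⟨δ, hδ0, hδ⟩ := h1'
  have hsmall : ∀ t : ℝ, |t| < δ → |f t| ≤ ε * |t| ^ (r - 1) := by
    intro t ht
    rcases eq_or_ne t 0 with h | h
    · simp [h, f0, Real.zero_rpow (by linarith : r - 1 ≠ 0)]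
    · have hmem := hδ (by rwa [Real.dist_eq, sub_zero]) (by simpa using h)
      have htpos : 0 < |t| := abs_pos.mpr h
      have hpos : 0 < |t| ^ (r - 1) := Real.rpow_pos_of_pos htpos _
      rw [abs_div, abs_of_nonneg hpos.le, div_lt_iff₀ hpos] at hmem
      exact hmem.le
  -- middle
  obtain ⟨B, hB⟩ := (isCompact_Icc : IsCompact (Icc (-M) M)).exists_bound_of_continuousOn
    hf0.continuousOn
  set B' : ℝ := max B 0 with hB'_def
  have hB'0 : 0 ≤ B' := le_max_right _ _
  have hδr : 0 < δ ^ (r - 1) := Real.rpow_pos_of_pos hδ0 _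
  refine ⟨ε + B' / δ ^ (r - 1), by positivity, fun t => ?_⟩
  have hq_nn : 0 ≤ ε * |t| ^ (q - 1) := by positivity
  have hr_nn : 0 ≤ |t| ^ (r - 1) := Real.rpow_nonneg (abs_nonneg t) _
  rcases lt_or_ge |t| δ with h | h
  · have := hsmall t h
    nlinarith [mul_nonneg (div_nonneg hB'0 hδr.le) hr_nn]
  · rcases le_or_gt |t| M with h2 | h2
    · have htI : t ∈ Icc (-M) M := abs_le.mp h2
      have hfB : |f t| ≤ B' := le_trans (hB t htI) (le_max_left _ _)
      have hmono : δ ^ (r - 1) ≤ |t| ^ (r - 1) :=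
        Real.rpow_le_rpow hδ0.le h hr0.le
      have key : B' ≤ (B' / δ ^ (r - 1)) * |t| ^ (r - 1) := by
        calc B' = (B' / δ ^ (r - 1)) * δ ^ (r - 1) := by
              rw [div_mul_cancel₀ _ hδr.ne']
          _ ≤ (B' / δ ^ (r - 1)) * |t| ^ (r - 1) :=
              mul_le_mul_of_nonneg_left hmono (by positivity)
      nlinarith [mul_nonneg hε.le hr_nn]
    · have := hlarge t h2
      nlinarith [mul_nonneg (div_nonneg hB'0 hδr.le) hr_nn,
        mul_nonneg hε.le hr_nn]

private lemma primitive_bound (f : ℝ → ℝ) (hf0 : Continuous f) (q r a b : ℝ)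
    (hq : 1 < q) (hr : 1 < r) (ha : 0 ≤ a) (hb : 0 ≤ b)
    (hbd : ∀ t : ℝ, |f t| ≤ a * |t| ^ (q - 1) + b * |t| ^ (r - 1)) (t : ℝ) :
    |∫ s in (0:ℝ)..t, f s| ≤ a * |t| ^ q + b * |t| ^ r := by
  have habs : ∀ s ∈ Set.uIoc (0:ℝ) t, |s| ≤ |t| := by
    intro s hs
    rcases Set.mem_uIoc.mp hs with ⟨h1, h2⟩ | ⟨h1, h2⟩
    · rw [abs_of_pos h1]; exact le_trans h2 (le_abs_self t)
    · rw [abs_of_nonpos h2]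
      calc -s ≤ -t := by linarith
        _ ≤ |t| := neg_le_abs t
  have key : ‖∫ s in (0:ℝ)..t, f s‖ ≤ (a * |t| ^ (q - 1) + b * |t| ^ (r - 1)) * |t - 0| := by
    apply intervalIntegral.norm_integral_le_of_norm_le_const
    intro s hs
    rw [Real.norm_eq_abs]
    calc |f s| ≤ a * |s| ^ (q - 1) + b * |s| ^ (r - 1) := hbd s
      _ ≤ a * |t| ^ (q - 1) + b * |t| ^ (r - 1) := by
          have h1 : |s| ^ (q - 1) ≤ |t| ^ (q - 1) :=
            Real.rpow_le_rpow (abs_nonneg s) (habs s hs) (by linarith)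
          have h2 : |s| ^ (r - 1) ≤ |t| ^ (r - 1) :=
            Real.rpow_le_rpow (abs_nonneg s) (habs s hs) (by linarith)
          have := mul_le_mul_of_nonneg_left h1 ha
          have := mul_le_mul_of_nonneg_left h2 hb
          linarith
  rw [Real.norm_eq_abs] at key
  calc |∫ s in (0:ℝ)..t, f s| ≤ (a * |t| ^ (q - 1) + b * |t| ^ (r - 1)) * |t - 0| := key
    _ = a * (|t| ^ (q - 1) * |t|) + b * (|t| ^ (r - 1) * |t|) := by
        rw [sub_zero]; ring
    _ = a * |t| ^ q + b * |t| ^ r := by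
        rw [abs_rpow_mul_abs t q hq, abs_rpow_mul_abs t r hr]

private lemma key_conv (N : ℕ) (q r : ℝ) (hq : 0 < q) (hr : 0 < r) (G : ℝ → ℝ)
    (hG : Continuous G)
    (hbound : ∀ ε > 0, ∃ D ≥ 0, ∀ t : ℝ, |G t| ≤ ε * |t| ^ q + D * |t| ^ r)
    (u : ℕ → (Fin N → ℝ) → ℝ) (hmeas : ∀ n : ℕ, Measurable (u n))
    (hint1 : ∀ n : ℕ, Integrable (fun x : Fin N → ℝ => |u n x| ^ q))
    (hint2 : ∀ n : ℕ, Integrable (fun x : Fin N → ℝ => |u n x| ^ r))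
    (C : ℝ) (hC : ∀ n : ℕ, (∫ x : Fin N → ℝ, |u n x| ^ q) ≤ C)
    (hto0 : Tendsto (fun n : ℕ => ∫ x : Fin N → ℝ, |u n x| ^ r) atTop (nhds 0)) :
    Tendsto (fun n : ℕ => ∫ x : Fin N → ℝ, G (u n x)) atTop (nhds 0) := by
  rw [NormedAddCommGroup.tendsto_nhds_zero]
  intro ε hε
  have hC0 : 0 ≤ C := by
    refine le_trans ?_ (hC 0)
    exact integral_nonneg fun x => Real.rpow_nonneg (abs_nonneg _) _
  set ε' : ℝ := ε / (2 * (C + 1)) with hε'_def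
  have hε'0 : 0 < ε' := by positivity
  obtain ⟨D, hD0, hDb⟩ := hbound ε' hε'0
  have hb : ∀ n, ‖∫ x : Fin N → ℝ, G (u n x)‖ ≤ ε' * C + D * ∫ x, |u n x| ^ r := by
    intro n
    have hmG : AEStronglyMeasurable (fun x : Fin N → ℝ => G (u n x)) volume :=
      (hG.measurable.comp (hmeas n)).aestronglyMeasurable
    have hdom : Integrable (fun x : Fin N → ℝ => ε' * |u n x| ^ q + D * |u n x| ^ r) :=
      ((hint1 n).const_mul ε').add ((hint2 n).const_mul D)
    have hintG : Integrable (fun x : Fin N → ℝ => G (u n x)) := by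
      refine Integrable.mono hdom hmG ?_
      filter_upwards with x
      rw [Real.norm_eq_abs, Real.norm_eq_abs]
      refine le_trans (hDb (u n x)) (le_abs_self _)
    calc ‖∫ x : Fin N → ℝ, G (u n x)‖ ≤ ∫ x, ‖G (u n x)‖ := norm_integral_le_integral_norm _
      _ ≤ ∫ x, (ε' * |u n x| ^ q + D * |u n x| ^ r) := by
          refine integral_mono hintG.norm hdom fun x => ?_
          rw [Real.norm_eq_abs]
          exact hDb (u n x)
      _ = ε' * (∫ x, |u n x| ^ q) + D * ∫ x, |u n x| ^ r := by
          rw [integral_add ((hint1 n).const_mul ε') ((hint2 n).const_mul D),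
            integral_const_mul, integral_const_mul]
      _ ≤ ε' * C + D * ∫ x, |u n x| ^ r := by
          have := mul_le_mul_of_nonneg_left (hC n) hε'0.le
          linarith
  have htail : ∀ᶠ n in atTop, D * (∫ x : Fin N → ℝ, |u n x| ^ r) < ε / 2 := by
    have hmul : Tendsto (fun n : ℕ => D * ∫ x : Fin N → ℝ, |u n x| ^ r) atTop (nhds 0) := by
      have := hto0.const_mul D
      simpa using this
    exact hmul.eventually_lt_const (by linarith)
  have hεC : ε' * C ≤ ε / 2 := by
    rw [hε'_def, div_mul_eq_mul_div, div_le_div_iff₀ (by positivity) (by norm_num)]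
    nlinarith
  filter_upwards [htail] with n hn
  calc ‖∫ x : Fin N → ℝ, G (u n x)‖ ≤ ε' * C + D * ∫ x, |u n x| ^ r := hb n
    _ < ε / 2 + ε / 2 := by linarith
    _ = ε := by ring

theorem stmt_13 (N : ℕ) (hN : 3 ≤ N) (p : ℝ) (hp2 : 2 ≤ p) (hpN : p < (N : ℝ))
    (f F Ft : ℝ → ℝ) (hf0 : Continuous f)
    (hF : ∀ t : ℝ, F t = ∫ s in (0:ℝ)..t, f s)
    (hFt : ∀ t : ℝ, Ft t = f t * t - 2 * F t)
    (hf1 : Tendsto (fun t : ℝ => f t / |t| ^ (p + 2 * p / (N : ℝ) - 1)) (nhdsWithin 0 {0}ᶜ) (nhds 0))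
    (hf2 : Tendsto (fun t : ℝ => f t / |t| ^ ((N : ℝ) * p / ((N : ℝ) - p) - 1)) (cocompact ℝ) (nhds 0))
    (u : ℕ → (Fin N → ℝ) → ℝ) (hmeas : ∀ n : ℕ, Measurable (u n))
    (hint1 : ∀ n : ℕ, Integrable (fun x : Fin N → ℝ => |u n x| ^ ((N : ℝ) * p / ((N : ℝ) - p))))
    (hint2 : ∀ n : ℕ, Integrable (fun x : Fin N → ℝ => |u n x| ^ (p + 2 * p / (N : ℝ))))
    (C : ℝ) (hC : ∀ n : ℕ, (∫ x : Fin N → ℝ, |u n x| ^ ((N : ℝ) * p / ((N : ℝ) - p))) ≤ C)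
    (hto0 : Tendsto (fun n : ℕ => ∫ x : Fin N → ℝ, |u n x| ^ (p + 2 * p / (N : ℝ))) atTop (nhds 0)) :
    Tendsto (fun n : ℕ => ∫ x : Fin N → ℝ, F (u n x)) atTop (nhds 0) ∧
    Tendsto (fun n : ℕ => ∫ x : Fin N → ℝ, Ft (u n x)) atTop (nhds 0) := by
  set q : ℝ := (N : ℝ) * p / ((N : ℝ) - p) with hq_def
  set r : ℝ := p + 2 * p / (N : ℝ) with hr_def
  have hN3 : (3 : ℝ) ≤ (N : ℝ) := by exact_mod_cast hN
  have hNpos : (0 : ℝ) < (N : ℝ) := by linarith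
  have hNp : (0 : ℝ) < (N : ℝ) - p := by linarith
  have hp0 : (0 : ℝ) < p := by linarith
  have hr1 : 1 < r := by
    have : 0 < 2 * p / (N : ℝ) := by positivity
    simp only [hr_def]; linarith
  have hrq : r < q := by
    have hre : r = (p * (N : ℝ) + 2 * p) / (N : ℝ) := by
      rw [hr_def, eq_div_iff hNpos.ne']
      field_simp
    rw [hre, hq_def, div_lt_div_iff₀ hNpos hNp]
    nlinarith [mul_le_mul_of_nonneg_right hp2 hNpos.le, mul_pos hp0 hp0]
  have hq1 : 1 < q := lt_trans hr1 hrq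
  -- continuity of F and Ft
  have hFeq : F = fun t => ∫ s in (0:ℝ)..t, f s := funext hF
  have hFcont : Continuous F := by
    rw [hFeq]
    exact intervalIntegral.continuous_primitive (fun a b => hf0.intervalIntegrable a b) 0
  have hFtcont : Continuous Ft := by
    have : Ft = fun t => f t * t - 2 * F t := funext hFt
    rw [this]
    exact ((hf0.mul continuous_id).sub (continuous_const.mul hFcont))
  have hFbound : ∀ ε > 0, ∃ D ≥ 0, ∀ t : ℝ, |F t| ≤ ε * |t| ^ q + D * |t| ^ r := by
    intro ε hε
    obtain ⟨D, hD0, hDb⟩ := growth_bound f hf0 q r hr1 hrq hf1 hf2 ε hε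
    refine ⟨D, hD0, fun t => ?_⟩
    rw [hF t]
    exact primitive_bound f hf0 q r ε D hq1 hr1 hε.le hD0 hDb t
  have hFtbound : ∀ ε > 0, ∃ D ≥ 0, ∀ t : ℝ, |Ft t| ≤ ε * |t| ^ q + D * |t| ^ r := by
    intro ε hε
    have hε3 : 0 < ε / 3 := by linarith
    obtain ⟨D, hD0, hDb⟩ := growth_bound f hf0 q r hr1 hrq hf1 hf2 (ε / 3) hε3
    refine ⟨3 * D, by linarith, fun t => ?_⟩
    have h1 : |f t * t| ≤ (ε / 3) * |t| ^ q + D * |t| ^ r := by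
      rw [abs_mul]
      calc |f t| * |t| ≤ ((ε / 3) * |t| ^ (q - 1) + D * |t| ^ (r - 1)) * |t| := by
            exact mul_le_mul_of_nonneg_right (hDb t) (abs_nonneg t)
        _ = (ε / 3) * (|t| ^ (q - 1) * |t|) + D * (|t| ^ (r - 1) * |t|) := by ring
        _ = (ε / 3) * |t| ^ q + D * |t| ^ r := by
            rw [abs_rpow_mul_abs t q hq1, abs_rpow_mul_abs t r hr1]
    have h2 : |F t| ≤ (ε / 3) * |t| ^ q + D * |t| ^ r := by
      rw [hF t]
      exact primitive_bound f hf0 q r (ε / 3) D hq1 hr1 hε3.le hD0 hDb t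
    calc |Ft t| = |f t * t - 2 * F t| := by rw [hFt t]
      _ ≤ |f t * t| + |2 * F t| := abs_sub _ _
      _ = |f t * t| + 2 * |F t| := by rw [abs_mul (2:ℝ), abs_two]
      _ ≤ ((ε / 3) * |t| ^ q + D * |t| ^ r) + 2 * ((ε / 3) * |t| ^ q + D * |t| ^ r) := by
          linarith
      _ = ε * |t| ^ q + 3 * D * |t| ^ r := by ring
  constructor
  · exact key_conv N q r (by linarith) (by linarith) F hFcont hFbound u hmeas hint1 hint2 C hC hto0
  · exact key_conv N q r (by linarith) (by linarith) Ft hFtcont hFtbound u hmeas hint1 hint2 C hC hto0
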